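/- arXiv:2301.05514 — 2 statements merged into one kernel-verified Lean document; each statement's English description precedes it below -/
import Mathlib

section
/- For any two (not necessarily distinct) vertices u_1 and u_2 of D_5, there exist at least 16 branch vertices v of D_5 with dist_{D_5}(u_1, v) ≥ 4 and dist_{D_5}(u_2, v) ≥ 4; in particular, there exists a branch vertex at distance at least 4 from both u_1 and u_2. -/
/-!
The dodecahedron graph `Dod` is realized as the generalized Petersen graph GP(10,2)
(the 3-regular graph on 20 vertices and 30 edges that is the 1-skeleton of the regular
dodecahedron).  Its 30 edges are indexed by `DE = Fin 3 × ZMod 10`: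
* `(0, i)` : outer-cycle edge `(0,i) — (0,i+1)`,
* `(1, i)` : spoke `(0,i) — (1,i)`,
* `(2, i)` : inner edge `(1,i) — (1,i+2)`.
`D5` is the 5-fold subdivision of `Dod`: every edge is replaced by a path with exactly
5 internal new vertices. The branch vertices (degree-3 vertices) of `D5` are exactly
the vertices of the form `Sum.inl v`, corresponding bijectively to the vertices of `Dod`.
-/

/-- Vertices of the dodecahedron graph. -/
abbrev DV : Type := Fin 2 × ZMod 10

/-- (Indexing type for the) edges of the dodecahedron graph. -/
abbrev DE : Type := Fin 3 × ZMod 10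

/-- First endpoint of an edge of the dodecahedron graph. -/
def ep0 (e : DE) : DV :=
  if e.1 = 0 then (0, e.2) else if e.1 = 1 then (0, e.2) else (1, e.2)

/-- Second endpoint of an edge of the dodecahedron graph. -/
def ep1 (e : DE) : DV :=
  if e.1 = 0 then (0, e.2 + 1) else if e.1 = 1 then (1, e.2) else (1, e.2 + 2)

/-- The dodecahedron graph `D` (as the generalized Petersen graph GP(10,2)). -/
def Dod : SimpleGraph DV :=
  SimpleGraph.fromRel (fun u v => ∃ e : DE, u = ep0 e ∧ v = ep1 e)

/-- Vertices of the 5-fold subdivision `D_5` of the dodecahedron graph: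
original (branch) vertices, plus 5 internal vertices on each edge. -/
abbrev DV5 : Type := DV ⊕ (DE × Fin 5)

/-- The edges of `D_5`: each edge `e` of the dodecahedron becomes the path
`ep0 e — (e,0) — (e,1) — (e,2) — (e,3) — (e,4) — ep1 e` of length 6. -/
def D5Rel : DV5 → DV5 → Prop
  | Sum.inl u, Sum.inr (e, i) => (u = ep0 e ∧ i = (0 : Fin 5)) ∨ (u = ep1 e ∧ i = (4 : Fin 5))
  | Sum.inr (e, i), Sum.inr (e', j) => e = e' ∧ (j : ℕ) = (i : ℕ) + 1
  | _, _ => False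

/-- The 5-fold subdivision `D_5` of the dodecahedron graph. -/
def D5 : SimpleGraph DV5 := SimpleGraph.fromRel D5Rel

instance instDecD5Rel : ∀ u v : DV5, Decidable (D5Rel u v)
  | Sum.inl _, Sum.inl _ => inferInstanceAs (Decidable False)
  | Sum.inl _, Sum.inr (_, _) => inferInstanceAs (Decidable (_ ∨ _))
  | Sum.inr (_, _), Sum.inl _ => inferInstanceAs (Decidable False)
  | Sum.inr (_, _), Sum.inr (_, _) => inferInstanceAs (Decidable (_ ∧ _))

instance instDecD5Adj : ∀ u v : DV5, Decidable (D5.Adj u v) := fun u v =>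
  decidable_of_iff _ (SimpleGraph.fromRel_adj D5Rel u v).symm

instance decMemDV5 : ∀ (a : DV5) (l : List DV5), Decidable (a ∈ l)
  | _, [] => isFalse (by simp)
  | a, b :: l =>
      haveI := decMemDV5 a l
      decidable_of_iff (a = b ∨ a ∈ l) (by simp [List.mem_cons])

def nbrs : DV5 → List DV5
  | Sum.inl v =>
      if v.1 = 0 then
        [Sum.inr ((0, v.2), 0), Sum.inr ((1, v.2), 0), Sum.inr ((0, v.2 - 1), 4)]
      else
        [Sum.inr ((1, v.2), 4), Sum.inr ((2, v.2), 0), Sum.inr ((2, v.2 - 2), 4)]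
  | Sum.inr (e, i) =>
      if i = 0 then [Sum.inl (ep0 e), Sum.inr (e, 1)]
      else if i = 1 then [Sum.inr (e, 0), Sum.inr (e, 2)]
      else if i = 2 then [Sum.inr (e, 1), Sum.inr (e, 3)]
      else if i = 3 then [Sum.inr (e, 2), Sum.inr (e, 4)]
      else [Sum.inr (e, 3), Sum.inl (ep1 e)]

set_option maxRecDepth 100000 in
set_option maxHeartbeats 4000000 in
lemma mem_nbrs : ∀ u w : DV5, D5.Adj u w → w ∈ nbrs u := by decide

def ball (u : DV5) : ℕ → List DV5
  | 0 => [u]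
  | n + 1 => (ball u n).flatMap nbrs ++ ball u n

lemma ball_walk (u : DV5) : ∀ (n : ℕ) (v : DV5) (p : D5.Walk v u), p.length ≤ n → v ∈ ball u n := by
  intro n
  induction n with
  | zero =>
      intro v p hp
      cases p with
      | nil => simp [ball]
      | cons h q => simp at hp
  | succ n ih =>
      intro v p hp
      cases p with
      | nil => exact List.mem_append_right _ (ih _ SimpleGraph.Walk.nil (by simp))
      | cons h q =>
          refine List.mem_append_left _ ?_
          refine List.mem_flatMap.2 ⟨_, ih _ q (by simpa using hp), mem_nbrs _ _ h.symm⟩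

lemma adj_ep0 (e : DE) : D5.Adj (Sum.inl (ep0 e)) (Sum.inr (e, 0)) := by
  rw [D5, SimpleGraph.fromRel_adj]
  exact ⟨by simp, Or.inl (Or.inl ⟨rfl, rfl⟩)⟩

lemma adj_ep1 (e : DE) : D5.Adj (Sum.inl (ep1 e)) (Sum.inr (e, 4)) := by
  rw [D5, SimpleGraph.fromRel_adj]
  exact ⟨by simp, Or.inl (Or.inr ⟨rfl, rfl⟩)⟩

lemma adj_step (e : DE) (i j : Fin 5) (h : (j : ℕ) = (i : ℕ) + 1) :
    D5.Adj (Sum.inr (e, i)) (Sum.inr (e, j)) := by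
  rw [D5, SimpleGraph.fromRel_adj]
  refine ⟨?_, Or.inl ⟨rfl, h⟩⟩
  intro hh
  rw [Sum.inr.injEq, Prod.mk.injEq] at hh
  have : (j : ℕ) = (i : ℕ) := by rw [hh.2]
  omega

lemma reachInt (e : DE) : ∀ i : Fin 5, D5.Reachable (Sum.inl (ep0 e)) (Sum.inr (e, i)) := by
  have r0 := (adj_ep0 e).reachable
  have r1 := r0.trans (adj_step e 0 1 (by decide)).reachable
  have r2 := r1.trans (adj_step e 1 2 (by decide)).reachable
  have r3 := r2.trans (adj_step e 2 3 (by decide)).reachable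
  have r4 := r3.trans (adj_step e 3 4 (by decide)).reachable
  intro i
  fin_cases i <;> assumption

lemma reachEdge (e : DE) : D5.Reachable (Sum.inl (ep0 e)) (Sum.inl (ep1 e)) :=
  (reachInt e 4).trans (adj_ep1 e).reachable.symm

lemma reachB : ∀ v : DV, D5.Reachable (Sum.inl ((0 : Fin 2), (0 : ZMod 10))) (Sum.inl v) := by
  have stepO : ∀ i : ZMod 10,
      D5.Reachable (Sum.inl ((0 : Fin 2), i)) (Sum.inl ((0 : Fin 2), i + 1)) := by
    intro i
    have h := reachEdge ((0 : Fin 3), i)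
    simpa [ep0, ep1] using h
  have spoke : ∀ i : ZMod 10,
      D5.Reachable (Sum.inl ((0 : Fin 2), i)) (Sum.inl ((1 : Fin 2), i)) := by
    intro i
    have h := reachEdge ((1 : Fin 3), i)
    simpa [ep0, ep1] using h
  have key : ∀ n : ℕ, D5.Reachable (Sum.inl ((0:Fin 2), (0:ZMod 10)))
      (Sum.inl ((0 : Fin 2), (n : ZMod 10))) := by
    intro n
    induction n with
    | zero => simpa using SimpleGraph.Reachable.refl _
    | succ n ih =>
        have := ih.trans (stepO (n : ZMod 10))
        simpa [Nat.cast_succ] using this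
  have rO : ∀ i : ZMod 10, D5.Reachable (Sum.inl ((0:Fin 2), (0:ZMod 10)))
      (Sum.inl ((0 : Fin 2), i)) := by
    intro i
    have := key i.val
    rwa [ZMod.natCast_rightInverse i] at this
  rintro ⟨a, i⟩
  fin_cases a
  · exact rO i
  · exact (rO i).trans (spoke i)

lemma reachAll : ∀ u : DV5, D5.Reachable (Sum.inl ((0 : Fin 2), (0 : ZMod 10))) u := by
  rintro (v | ⟨e, i⟩)
  · exact reachB v
  · exact (reachB (ep0 e)).trans (reachInt e i)

lemma far (u : DV5) (v : DV) (h : Sum.inl v ∉ ball u 3) : 4 ≤ D5.dist u (Sum.inl v) := by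
  have hr : D5.Reachable u (Sum.inl v) := (reachAll u).symm.trans (reachAll _)
  by_contra hlt
  push_neg at hlt
  obtain ⟨p, hp⟩ := hr.exists_walk_length_eq_dist
  exact h (ball_walk u 3 _ p.reverse (by rw [SimpleGraph.Walk.length_reverse, hp]; omega))

def branchBad (u : DV5) : Finset DV := Finset.univ.filter (fun v => Sum.inl v ∈ ball u 3)

set_option maxRecDepth 100000 in
set_option maxHeartbeats 4000000 in
lemma branchBad_card : ∀ u : DV5, (branchBad u).card ≤ 2 := by decide

/-- For any two (not necessarily distinct) vertices `u₁` and `u₂` of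
`D_5`, there exist at least 16 branch vertices `v` with `dist_{D_5}(u₁, v) ≥ 4` and
`dist_{D_5}(u₂, v) ≥ 4`; in particular, there exists a branch vertex at distance at
least 4 from both `u₁` and `u₂`. -/
theorem many_branch_vertices_far_from_two_vertices (u₁ u₂ : DV5) :
    16 ≤ {v : DV | 4 ≤ D5.dist u₁ (Sum.inl v) ∧ 4 ≤ D5.dist u₂ (Sum.inl v)}.ncard ∧
    ∃ v : DV, 4 ≤ D5.dist u₁ (Sum.inl v) ∧ 4 ≤ D5.dist u₂ (Sum.inl v) := by
  set S : Set DV := {v : DV | 4 ≤ D5.dist u₁ (Sum.inl v) ∧ 4 ≤ D5.dist u₂ (Sum.inl v)} with hS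
  have hBadCard : (branchBad u₁ ∪ branchBad u₂).card ≤ 4 := by
    refine le_trans (Finset.card_union_le _ _) ?_
    have := branchBad_card u₁
    have := branchBad_card u₂
    omega
  set G : Finset DV := Finset.univ \ (branchBad u₁ ∪ branchBad u₂) with hG
  have hGcard : 16 ≤ G.card := by
    rw [hG, Finset.card_sdiff_of_subset (Finset.subset_univ _), Finset.card_univ]
    have h20 : Fintype.card DV = 20 := by decide
    omega
  have hsub : (G : Set DV) ⊆ S := by
    intro v hv
    simp only [hG, Finset.coe_sdiff, Finset.coe_union, Set.mem_diff, Set.mem_union,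
      Finset.mem_coe, Finset.mem_filter, branchBad, Finset.mem_univ, true_and] at hv
    push_neg at hv
    exact ⟨far u₁ v hv.1, far u₂ v hv.2⟩
  have hle : 16 ≤ S.ncard := by
    have := Set.ncard_le_ncard hsub (Set.toFinite _)
    rw [Set.ncard_coe_finset] at this
    omega
  refine ⟨hle, ?_⟩
  obtain ⟨v, hv⟩ := Set.nonempty_of_ncard_ne_zero (s := S) (by omega)
  exact ⟨v, hv⟩
end

section
/- Let v and w be branch vertices of D_5 with dist_{D_5}(v, w) = 6. Then for every neighbor s of v in D_5 there exists a neighbor t of w in D_5 with dist_{D_5}(s, t) = 4 or dist_{D_5}(s, t) = 6. -/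
/-- A proper 2-coloring of `D5`. -/
def col : DV5 → ZMod 2
  | Sum.inl _ => 0
  | Sum.inr (_, i) => (i : ℕ) + 1

lemma col_rel {x y : DV5} (h : D5Rel x y) : col x + col y = 1 := by
  cases x with
  | inl u =>
    cases y with
    | inl u' => exact absurd h (by simp [D5Rel])
    | inr p =>
      obtain ⟨e, i⟩ := p
      rcases h with ⟨-, hi⟩ | ⟨-, hi⟩ <;> subst hi <;> simp [col] <;> decide
  | inr p =>
    obtain ⟨e, i⟩ := p
    cases y with
    | inl u' => exact absurd h (by simp [D5Rel])
    | inr p' =>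
      obtain ⟨e', j⟩ := p'
      obtain ⟨-, hj⟩ := h
      simp only [col]
      have hcast : ((j : ℕ) : ZMod 2) = ((i : ℕ) : ZMod 2) + 1 := by rw [hj]; push_cast; ring
      rw [hcast]
      linear_combination (((i : ℕ) : ZMod 2) + 1) * (by decide : (2 : ZMod 2) = 0)

lemma col_adj {x y : DV5} (h : D5.Adj x y) : col y = col x + 1 := by
  have key : col x + col y = 1 := by
    rcases h.2 with h' | h'
    · exact col_rel h'
    · rw [add_comm]; exact col_rel h'
  have : ∀ a b : ZMod 2, a + b = 1 → b = a + 1 := by decide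
  exact this _ _ key

lemma walk_parity {x y : DV5} (p : D5.Walk x y) :
    (p.length : ZMod 2) = col x + col y := by
  induction p with
  | nil =>
    have hself : ∀ a : ZMod 2, a + a = 0 := by decide
    rw [SimpleGraph.Walk.length_nil, Nat.cast_zero]
    exact (hself _).symm
  | cons h p ih =>
    rw [SimpleGraph.Walk.length_cons]
    push_cast
    rw [ih, col_adj h]
    linear_combination (by decide : (2 : ZMod 2) = 0)


/-- Let `v` and `w` be branch vertices of `D_5` with
`dist_{D_5}(v, w) = 6`. Then for every neighbor `s` of `v` in `D_5` there exists a
neighbor `t` of `w` in `D_5` with `dist_{D_5}(s, t) = 4` or `dist_{D_5}(s, t) = 6`. -/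
theorem neighbor_of_far_branch_vertex_at_distance_four_or_six
    (v w : DV) (hvw : D5.dist (Sum.inl v) (Sum.inl w) = 6)
    (s : DV5) (hs : D5.Adj (Sum.inl v) s) :
    ∃ t : DV5, D5.Adj (Sum.inl w) t ∧ (D5.dist s t = 4 ∨ D5.dist s t = 6) := by
  have hrvw : D5.Reachable (Sum.inl v) (Sum.inl w) :=
    SimpleGraph.Reachable.of_dist_ne_zero (by rw [hvw]; norm_num)
  have hevw : D5.edist (Sum.inl v) (Sum.inl w) = 6 := by
    have hne := SimpleGraph.edist_ne_top_iff_reachable.mpr hrvw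
    rw [← ENat.coe_toNat hne]
    exact_mod_cast congrArg (Nat.cast : ℕ → ℕ∞) hvw
  have hevs : D5.edist (Sum.inl v) s = 1 := SimpleGraph.edist_eq_one_iff_adj.mpr hs
  have hrws : D5.Reachable (Sum.inl w) s := hrvw.symm.trans hs.reachable
  set d := D5.dist (Sum.inl w) s with hd
  have hews : D5.edist (Sum.inl w) s = (d : ℕ∞) := by
    have hne := SimpleGraph.edist_ne_top_iff_reachable.mpr hrws
    rw [← ENat.coe_toNat hne]; rfl
  -- d ≤ 7
  have hd7 : d ≤ 7 := by
    have hub : D5.edist (Sum.inl w) s ≤ 7 := by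
      calc D5.edist (Sum.inl w) s ≤ D5.edist (Sum.inl w) (Sum.inl v) + D5.edist (Sum.inl v) s :=
            SimpleGraph.edist_triangle
        _ = 7 := by rw [SimpleGraph.edist_comm, hevw, hevs]; rfl
    rw [hews] at hub
    exact_mod_cast hub
  -- d ≥ 5
  have hd5 : 5 ≤ d := by
    have hlb : (6 : ℕ∞) ≤ 1 + D5.edist (Sum.inl w) s := by
      calc (6 : ℕ∞) = D5.edist (Sum.inl v) (Sum.inl w) := hevw.symm
        _ ≤ D5.edist (Sum.inl v) s + D5.edist s (Sum.inl w) := SimpleGraph.edist_triangle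
        _ = 1 + D5.edist (Sum.inl w) s := by rw [hevs, SimpleGraph.edist_comm]
    rw [hews] at hlb
    have : (6 : ℕ) ≤ 1 + d := by exact_mod_cast hlb
    omega
  -- parity: d is odd
  obtain ⟨p, hp⟩ := hrws.exists_walk_length_eq_dist
  have hcols : col s = 1 := by rw [col_adj hs]; rfl
  have hpar : (d : ZMod 2) = 1 := by
    rw [hd, ← hp, walk_parity p, hcols]; rfl
  have hd6 : d ≠ 6 := by
    intro h
    rw [h] at hpar
    exact absurd hpar (by decide)
  -- so d = 5 or d = 7
  -- t := second vertex of shortest walk p from w to s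
  have hlen : 0 < p.length := by omega
  refine ⟨p.getVert 1, ?_, ?_⟩
  · have := p.adj_getVert_succ hlen
    rwa [SimpleGraph.Walk.getVert_zero] at this
  · have hnotnil : ¬ p.Nil := by
      rw [SimpleGraph.Walk.not_nil_iff_lt_length]; exact hlen
    -- upper bound : dist (p.getVert 1) s ≤ d - 1
    have hup : D5.dist (p.getVert 1) s ≤ d - 1 := by
      have := SimpleGraph.dist_le p.tail
      change D5.dist (p.getVert 1) s ≤ p.tail.length at this
      have hlt := SimpleGraph.Walk.length_tail_add_one hnotnil
      omega
    -- lower bound via edist triangle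
    have hadj : D5.Adj (Sum.inl w) (p.getVert 1) := by
      have := p.adj_getVert_succ hlen
      rwa [SimpleGraph.Walk.getVert_zero] at this
    have hrts : D5.Reachable (p.getVert 1) s := hadj.reachable.symm.trans hrws
    have hets : D5.edist (p.getVert 1) s = (D5.dist (p.getVert 1) s : ℕ∞) := by
      have hne := SimpleGraph.edist_ne_top_iff_reachable.mpr hrts
      rw [← ENat.coe_toNat hne]; rfl
    have hlow : d - 1 ≤ D5.dist (p.getVert 1) s := by
      have htri : D5.edist (Sum.inl w) s ≤ D5.edist (Sum.inl w) (p.getVert 1) + D5.edist (p.getVert 1) s :=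
        SimpleGraph.edist_triangle
      rw [hews, SimpleGraph.edist_eq_one_iff_adj.mpr hadj, hets] at htri
      have : (d : ℕ) ≤ 1 + D5.dist (p.getVert 1) s := by exact_mod_cast htri
      omega
    have : D5.dist (p.getVert 1) s = d - 1 := le_antisymm hup hlow
    rw [SimpleGraph.dist_comm, this]
    omega
end
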